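/- Let N ≥ 2 and let m₀ ∈ L^∞(𝕋) be non-singular (i.e., its zero set has Haar measure zero). Suppose h ∈ L¹(𝕋), h ≥ 0, h ≠ 0 in L¹, and R_{m₀}(h) = h. Then h is non-singular, i.e., μ({z : h(z) = 0}) = 0. -/

import Mathlib

open MeasureTheory Filter Set
open scoped Real ENNReal

/-- The Ruelle transfer operator of order `N` with filter `m₀`, on complex
functions on the circle (encoded as `1`-periodic functions on `ℝ`):
`(Rf)(x) = (1/N) ∑_{k<N} |m₀((x+k)/N)|² f((x+k)/N)`. -/
noncomputable def ruelle (N : ℕ) (m₀ : ℝ → ℂ) (f : ℝ → ℂ) : ℝ → ℂ :=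
  fun x => (N : ℂ)⁻¹ *
    ∑ k ∈ Finset.range N, (‖m₀ ((x + k) / N)‖ : ℂ) ^ 2 * f ((x + k) / N)

/-- The Ruelle transfer operator acting on real-valued functions. -/
noncomputable def ruelleR (N : ℕ) (m₀ : ℝ → ℂ) (h : ℝ → ℝ) : ℝ → ℝ :=
  fun x => (N : ℝ)⁻¹ *
    ∑ k ∈ Finset.range N, ‖m₀ ((x + k) / N)‖ ^ 2 * h ((x + k) / N)

private lemma qmp_mul_left' {c : ℝ} (hc : c ≠ 0) :
    Measure.QuasiMeasurePreserving (fun x : ℝ => c * x) volume volume := by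
  refine ⟨measurable_id.const_mul c, ?_⟩
  rw [Real.map_volume_mul_left hc]
  exact Measure.AbsolutelyContinuous.mk fun s _ h0 => by simp [h0]

private lemma null_preimage_mk' {S : Set (AddCircle (1:ℝ))} (hS : MeasurableSet S)
    (h0 : volume S = 0) :
    volume ((QuotientAddGroup.mk : ℝ → AddCircle (1:ℝ)) ⁻¹' S) = 0 := by
  haveI : Fact ((0:ℝ) < 1) := ⟨zero_lt_one⟩
  set Z := (QuotientAddGroup.mk : ℝ → AddCircle (1:ℝ)) ⁻¹' S with hZ
  have hZm : MeasurableSet Z := QuotientAddGroup.measurable_coe hS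
  have key : ∀ n : ℤ, volume (Z ∩ Ioc (n:ℝ) ((n:ℝ)+1)) = 0 := by
    intro n
    have h1 := (AddCircle.measurePreserving_mk 1 (n:ℝ)).measure_preimage hS.nullMeasurableSet
    rw [Measure.restrict_apply hZm] at h1
    exact h1.trans h0
  have hsub : Z ⊆ ⋃ n : ℤ, Z ∩ Ioc (n:ℝ) ((n:ℝ)+1) := by
    intro x hx
    have hmem : x ∈ ⋃ n : ℤ, Ioc (n:ℝ) ((n:ℝ)+1) := by
      rw [iUnion_Ioc_intCast]; trivial
    obtain ⟨t, ⟨n, rfl⟩, hxt⟩ := hmem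
    exact mem_iUnion.mpr ⟨n, hx, hxt⟩
  exact measure_mono_null hsub (measure_iUnion_null key)

theorem stmt8 (N : ℕ) (hN : 2 ≤ N) (m₀ : ℝ → ℂ) (hm : Measurable m₀)
    (hmper : Function.Periodic m₀ 1) (hmb : ∃ C, ∀ᵐ x ∂volume, ‖m₀ x‖ ≤ C)
    (hmns : ∀ᵐ x ∂volume, m₀ x ≠ 0)
    (h : ℝ → ℝ) (hhm : Measurable h) (hhper : Function.Periodic h 1)
    (hpos : ∀ x, 0 ≤ h x) (hhi : IntegrableOn h (Set.Ioc (0:ℝ) 1))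
    (hne : ¬ (h =ᵐ[volume] 0))
    (hfix : ruelleR N m₀ h =ᵐ[volume] h) :
    ∀ᵐ x ∂volume, h x ≠ 0 := by
  haveI : Fact ((0:ℝ) < 1) := ⟨zero_lt_one⟩
  have hN0 : (N:ℝ) ≠ 0 := Nat.cast_ne_zero.mpr (by omega)
  -- Step 1: a.e. x, h x = 0 → h (x / N) = 0
  have hm0N : ∀ᵐ x ∂volume, m₀ ((N:ℝ)⁻¹ * x) ≠ 0 :=
    (qmp_mul_left' (inv_ne_zero hN0)).ae hmns
  have step1 : ∀ᵐ x ∂volume, (h x = 0 → h (x / N) = 0) := by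
    filter_upwards [hfix, hm0N] with x hfx hmx hx0
    rw [hx0] at hfx
    simp only [ruelleR] at hfx
    rcases mul_eq_zero.mp hfx with hc | hsum
    · exact absurd hc (inv_ne_zero hN0)
    · have hterm := (Finset.sum_eq_zero_iff_of_nonneg
        (fun k _ => mul_nonneg (by positivity) (hpos _))).mp hsum 0 (Finset.mem_range.mpr (by omega))
      simp only [Nat.cast_zero, add_zero] at hterm
      rcases mul_eq_zero.mp hterm with h1 | h1
      · exfalso
        have : ‖m₀ (x / N)‖ = 0 := by
          have := pow_eq_zero_iff (n := 2) (by norm_num) |>.mp h1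
          exact this
        rw [norm_eq_zero] at this
        rw [div_eq_inv_mul] at this
        exact hmx this
      · exact h1
  -- Step 2: a.e. x, h (N * x) = 0 → h x = 0
  have step2 : ∀ᵐ x ∂volume, (h ((N:ℝ) * x) = 0 → h x = 0) := by
    have h2 := (qmp_mul_left' hN0).ae step1
    filter_upwards [h2] with x hx hx0
    have := hx hx0
    rwa [mul_div_cancel_left₀ x hN0] at this
  -- AddCircle setup
  set H : AddCircle (1:ℝ) → ℝ := hhper.lift with hHdef
  have hHm : Measurable H := by
    rw [QuotientAddGroup.measurable_from_quotient]; exact hhm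
  have hHcoe : ∀ x : ℝ, H (x : AddCircle (1:ℝ)) = h x := fun x => hhper.lift_coe x
  set E : Set (AddCircle (1:ℝ)) := {y | H y = 0} with hEdef
  have hEm : MeasurableSet E := hHm (measurableSet_singleton 0)
  -- preimage of E under mk is the zero set of h
  have hpre : (QuotientAddGroup.mk : ℝ → AddCircle (1:ℝ)) ⁻¹' E = {x : ℝ | h x = 0} := by
    ext x; simp [hEdef, hHcoe]
  -- the doubling-type map
  have herg : Ergodic (fun y : AddCircle (1:ℝ) => N • y) := AddCircle.ergodic_nsmul (by omega)
  have hTE : ((fun y : AddCircle (1:ℝ) => N • y) ⁻¹' E) ≤ᵐ[volume] E := by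
    rw [MeasureTheory.ae_le_set]
    have hTm : Measurable (fun y : AddCircle (1:ℝ) => N • y) := herg.measurable
    have hUm : MeasurableSet (((fun y : AddCircle (1:ℝ) => N • y) ⁻¹' E) \ E) :=
      (hTm hEm).diff hEm
    rw [AddCircle.add_projection_respects_measure 1 0 hUm]
    have hsub : (QuotientAddGroup.mk : ℝ → AddCircle (1:ℝ)) ⁻¹'
        (((fun y : AddCircle (1:ℝ) => N • y) ⁻¹' E) \ E) ⊆
        {x : ℝ | ¬ (h ((N:ℝ) * x) = 0 → h x = 0)} := by
      intro x hx
      obtain ⟨hx1, hx2⟩ := hx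
      have e1 : ((N:ℕ) • (x : AddCircle (1:ℝ))) = (((N:ℝ) * x : ℝ) : AddCircle (1:ℝ)) := by
        rw [← QuotientAddGroup.mk_nsmul]
        norm_num [nsmul_eq_mul]
      simp only [mem_preimage, mem_setOf_eq] at hx1 ⊢
      intro him
      apply hx2
      have : H ((N:ℕ) • (x : AddCircle (1:ℝ))) = 0 := hx1
      rw [e1, hHcoe] at this
      have hx0 := him this
      show (x : AddCircle (1:ℝ)) ∈ E
      simp [hEdef, hHcoe, hx0]
    have hnull : volume {x : ℝ | ¬ (h ((N:ℝ) * x) = 0 → h x = 0)} = 0 := by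
      exact ae_iff.mp step2
    refine le_antisymm ?_ zero_le
    calc volume _ ≤ volume ((QuotientAddGroup.mk : ℝ → AddCircle (1:ℝ)) ⁻¹'
        (((fun y : AddCircle (1:ℝ) => N • y) ⁻¹' E) \ E)) := measure_mono inter_subset_left
      _ ≤ volume {x : ℝ | ¬ (h ((N:ℝ) * x) = 0 → h x = 0)} := measure_mono hsub
      _ = 0 := hnull
  rcases herg.ae_empty_or_univ_of_preimage_ae_le hEm.nullMeasurableSet hTE with hcase | hcase
  · -- E is null, so the zero set of h is null
    have hE0 : volume E = 0 := by rwa [MeasureTheory.ae_eq_empty] at hcase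
    have := null_preimage_mk' hEm hE0
    rw [hpre] at this
    rw [ae_iff]
    simpa using this
  · -- E is conull: h vanishes a.e., contradiction
    exfalso
    apply hne
    have hEc0 : volume Eᶜ = 0 := by rwa [MeasureTheory.ae_eq_univ] at hcase
    have hzc := null_preimage_mk' hEm.compl hEc0
    have hprec : (QuotientAddGroup.mk : ℝ → AddCircle (1:ℝ)) ⁻¹' Eᶜ = {x : ℝ | h x ≠ 0} := by
      rw [preimage_compl, hpre]; ext x; simp
    rw [hprec] at hzc
    rw [Filter.eventuallyEq_iff_exists_mem]
    refine ⟨{x : ℝ | h x = 0}, ?_, fun x hx => hx⟩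
    rw [mem_ae_iff]
    have hcc : {x : ℝ | h x = 0}ᶜ = {x : ℝ | h x ≠ 0} := by ext x; simp
    rw [hcc]
    exact hzc
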